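/- Let 0 < r < 1 and let s, s' ∈ S be words of the same slope with s ≺_lex s' strictly. Then t_r(s) < t_r(s'). -/

import Mathlib

/-- A sequence (indexed from 1) over the alphabet {0,1}. -/
def IsBinary (s : ℕ → ℤ) : Prop := ∀ i, s i = 0 ∨ s i = 1

/-- `s` is a Sturmian word of slope `θ` (floor or ceiling form). -/
def IsSturmian (θ : ℝ) (s : ℕ → ℤ) : Prop :=
  Irrational θ ∧ θ ∈ Set.Ioo (0:ℝ) 1 ∧
    ∃ ρ : ℝ,
      (∀ n : ℕ, 1 ≤ n → s n = ⌊((n:ℝ)+1)*θ+ρ⌋ - ⌊(n:ℝ)*θ+ρ⌋) ∨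
      (∀ n : ℕ, 1 ≤ n → s n = ⌈((n:ℝ)+1)*θ+ρ⌉ - ⌈(n:ℝ)*θ+ρ⌉)

/-- The characteristic Sturmian word of slope `θ`. -/
noncomputable def charWord (θ : ℝ) : ℕ → ℤ := fun n => ⌊((n:ℝ)+1)*θ⌋ - ⌊(n:ℝ)*θ⌋

/-- `tval r s = ∑_{i ≥ 1} s i * r ^ i`. -/
noncomputable def tval (r : ℝ) (s : ℕ → ℤ) : ℝ := ∑' i : ℕ, (s (i+1) : ℝ) * r^(i+1)

/-- Equality of infinite words (positions ≥ 1). -/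
def EqW (s s' : ℕ → ℤ) : Prop := ∀ i, 1 ≤ i → s i = s' i

/-- Strict lexicographic order on infinite words (positions ≥ 1). -/
def LexLt (s s' : ℕ → ℤ) : Prop :=
  ∃ n, 1 ≤ n ∧ (∀ i, 1 ≤ i → i < n → s i = s' i) ∧ s n < s' n

def LexLe (s s' : ℕ → ℤ) : Prop := LexLt s s' ∨ EqW s s'

/-- Strict alternate order on infinite words. -/
def AltLt (s s' : ℕ → ℤ) : Prop :=
  ∃ n, 1 ≤ n ∧ (∀ i, 1 ≤ i → i < n → s i = s' i) ∧ (-1:ℤ)^n * (s' n - s n) = 1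

def AltLe (s s' : ℕ → ℤ) : Prop := AltLt s s' ∨ EqW s s'

/-- The doubling map `D(w₁w₂…) = w₁w₁w₂w₂…`. -/
def Dbl (w : ℕ → ℤ) : ℕ → ℤ := fun n => w ((n+1)/2)

/-- The shift map `T(w₁w₂w₃…) = w₂w₃…`. -/
def Shf (w : ℕ → ℤ) : ℕ → ℤ := fun n => w (n+1)

/-- The word `a^l s` : the letter `a` repeated `l` times followed by `s`. -/
def Prepend (a : ℤ) (l : ℕ) (s : ℕ → ℤ) : ℕ → ℤ := fun n => if n ≤ l then a else s (n - l)

/-- The finite word `u` followed by the infinite word `s`. -/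
def Cat (u : List ℤ) (s : ℕ → ℤ) : ℕ → ℤ :=
  fun n => if n ≤ u.length then u.getD (n-1) 0 else s (n - u.length)

/-- The finite word `u` occurs as a contiguous block of `s` (at a position ≥ 1). -/
def Subword (u : List ℤ) (s : ℕ → ℤ) : Prop :=
  ∃ n, 1 ≤ n ∧ ∀ i, i < u.length → s (n + i) = u.getD i 0

/-- `s` is aperiodic: not eventually periodic. -/
def Aperiodic (s : ℕ → ℤ) : Prop :=
  ¬ ∃ k, 1 ≤ k ∧ ∃ N, 1 ≤ N ∧ ∀ n, N ≤ n → s n = s (n + k)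

/-- `w` has slope `θ`: the averages of its letters tend to `θ`. -/
def HasSlope (w : ℕ → ℤ) (θ : ℝ) : Prop :=
  Filter.Tendsto (fun n : ℕ => (∑ i ∈ Finset.Icc 1 n, (w i : ℝ)) / n)
    Filter.atTop (nhds θ)

/-- The class `S` of words of the form `0^l s` or `1^l s` with `s` Sturmian. -/
def MemS (w : ℕ → ℤ) : Prop :=
  ∃ a l s θ, (a = (0:ℤ) ∨ a = 1) ∧ IsSturmian θ s ∧ EqW w (Prepend a l s)

/-- The class `𝒟` of words of the form `0^l (D s)` or `1^l (D s)` with `s` Sturmian. -/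
def MemD (w : ℕ → ℤ) : Prop :=
  ∃ a l s θ, (a = (0:ℤ) ∨ a = 1) ∧ IsSturmian θ s ∧ EqW w (Prepend a l (Dbl s))

/-- The class `𝒫 = D(Σ^ℕ) ∪ T(D(Σ^ℕ))` with `Σ = {0,1}`. -/
def MemP (w : ℕ → ℤ) : Prop :=
  (∃ u, IsBinary u ∧ EqW w (Dbl u)) ∨ (∃ u, IsBinary u ∧ EqW w (Shf (Dbl u)))

/- ### Auxiliary machinery -/

/-- Partial sums of a word over positions `1..m`. -/
def WS (w : ℕ → ℤ) (m : ℕ) : ℤ := ∑ i ∈ Finset.range m, w (i+1)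

lemma ws_icc (w : ℕ → ℤ) (m : ℕ) : ∑ i ∈ Finset.Icc 1 m, w i = WS w m := by
  rw [show Finset.Icc 1 m = Finset.Ico 1 (m+1) by rw [Finset.Ico_add_one_right_eq_Icc],
    Finset.sum_Ico_eq_sum_range, WS]
  simp [Nat.add_comm]

lemma ws_succ (w : ℕ → ℤ) (m : ℕ) : WS w (m+1) = WS w m + w (m+1) := by
  simp [WS, Finset.sum_range_succ]

lemma ws_congr {s t : ℕ → ℤ} (h : ∀ n, 1 ≤ n → s n = t n) (k : ℕ) : WS s k = WS t k :=
  Finset.sum_congr rfl fun i _ => h (i+1) (by omega)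

lemma ws_split (w : ℕ → ℤ) {m k : ℕ} (h : m ≤ k) :
    WS w k = WS w m + ∑ i ∈ Finset.Ico m k, w (i+1) := by
  rw [WS, WS, Finset.range_eq_Ico, Finset.range_eq_Ico]
  exact (Finset.sum_Ico_consecutive (fun i => w (i+1)) (Nat.zero_le m) h).symm

lemma ws_sub (w w' : ℕ → ℤ) (m : ℕ) :
    WS w' m - WS w m = ∑ i ∈ Finset.range m, (w' (i+1) - w (i+1)) := by
  rw [WS, WS, Finset.sum_sub_distrib]

lemma fract_diff_lt (x y : ℝ) : |Int.fract x - Int.fract y| < 1 := by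
  rw [abs_sub_lt_iff]
  constructor <;> nlinarith [Int.fract_nonneg x, Int.fract_nonneg y,
    Int.fract_lt_one x, Int.fract_lt_one y]

lemma ceil_real (x : ℝ) : ((⌈x⌉:ℤ):ℝ) = x + Int.fract (-x) := by
  have h : (⌈x⌉:ℤ) = -⌊-x⌋ := by have := Int.floor_neg (R:=ℝ) (a:=x); omega
  have h2 : ((⌊-x⌋:ℤ):ℝ) = -x - Int.fract (-x) := (Int.self_sub_fract _).symm
  rw [h]; push_cast; rw [h2]; ring

/-- Partial sums of a Sturmian word stay within a band of width `< 1` around `k θ`. -/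
lemma sturmian_band {θ : ℝ} {s : ℕ → ℤ} (hs : IsSturmian θ s) :
    ∃ e : ℕ → ℝ, (∀ k, (WS s k : ℝ) = k * θ + e k) ∧ ∀ k₁ k₂, |e k₁ - e k₂| < 1 := by
  obtain ⟨-, -, ρ, hc | hc⟩ := hs
  · set F : ℕ → ℤ := fun n => ⌊(n:ℝ)*θ+ρ⌋ with hF
    refine ⟨fun k => Int.fract (θ+ρ) - Int.fract (((k:ℝ)+1)*θ+ρ), fun k => ?_,
      fun k₁ k₂ => ?_⟩
    · have h1 : WS s k = F (k+1) - F 1 := by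
        rw [ws_congr (t := fun n => F (n+1) - F n) (fun n hn => by
          simpa [hF] using hc n hn)]
        simpa [WS] using Finset.sum_range_sub (fun i => F (i+1)) k
      rw [h1]
      push_cast [hF]
      have e1 : (⌊((k:ℝ)+1)*θ+ρ⌋ : ℝ) = ((k:ℝ)+1)*θ+ρ - Int.fract (((k:ℝ)+1)*θ+ρ) :=
        (Int.self_sub_fract _).symm
      have e2 : (⌊(1:ℝ)*θ+ρ⌋ : ℝ) = (1:ℝ)*θ+ρ - Int.fract ((1:ℝ)*θ+ρ) :=
        (Int.self_sub_fract _).symm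
      push_cast at e1 e2 ⊢
      rw [e1, e2]
      rw [show (1:ℝ)*θ+ρ = θ+ρ by ring] at *
      ring_nf
    · have := fract_diff_lt (((k₂:ℝ)+1)*θ+ρ) (((k₁:ℝ)+1)*θ+ρ)
      rw [show Int.fract (θ+ρ) - Int.fract (((k₁:ℝ)+1)*θ+ρ) -
        (Int.fract (θ+ρ) - Int.fract (((k₂:ℝ)+1)*θ+ρ)) =
        Int.fract (((k₂:ℝ)+1)*θ+ρ) - Int.fract (((k₁:ℝ)+1)*θ+ρ) by ring]
      exact this
  · set F : ℕ → ℤ := fun n => ⌈(n:ℝ)*θ+ρ⌉ with hF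
    refine ⟨fun k => Int.fract (-(((k:ℝ)+1)*θ+ρ)) - Int.fract (-(θ+ρ)), fun k => ?_,
      fun k₁ k₂ => ?_⟩
    · have h1 : WS s k = F (k+1) - F 1 := by
        rw [ws_congr (t := fun n => F (n+1) - F n) (fun n hn => by
          simpa [hF] using hc n hn)]
        simpa [WS] using Finset.sum_range_sub (fun i => F (i+1)) k
      rw [h1]
      push_cast [hF]
      have e1 := ceil_real (((k:ℝ)+1)*θ+ρ)
      have e2 := ceil_real ((1:ℝ)*θ+ρ)
      push_cast at e1 e2 ⊢
      rw [e1, e2]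
      rw [show (1:ℝ)*θ+ρ = θ+ρ by ring] at *
      ring_nf
    · have := fract_diff_lt (-(((k₁:ℝ)+1)*θ+ρ)) (-(((k₂:ℝ)+1)*θ+ρ))
      rw [show Int.fract (-(((k₁:ℝ)+1)*θ+ρ)) - Int.fract (-(θ+ρ)) -
        (Int.fract (-(((k₂:ℝ)+1)*θ+ρ)) - Int.fract (-(θ+ρ))) =
        Int.fract (-(((k₁:ℝ)+1)*θ+ρ)) - Int.fract (-(((k₂:ℝ)+1)*θ+ρ)) by ring]
      exact this

lemma sturmian_binary {θ : ℝ} {s : ℕ → ℤ} (hs : IsSturmian θ s) {n : ℕ} (hn : 1 ≤ n) :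
    s n = 0 ∨ s n = 1 := by
  obtain ⟨e, he, heb⟩ := sturmian_band hs
  obtain ⟨-, ⟨hθ0, hθ1⟩, -⟩ := hs
  have h1 : WS s n = WS s (n-1) + s n := by
    have := ws_succ s (n-1)
    rwa [show n - 1 + 1 = n by omega] at this
  have h2 : (s n : ℝ) = θ + (e n - e (n-1)) := by
    have c1 := he n
    have c2 := he (n-1)
    have : ((n - 1 : ℕ) : ℝ) = (n : ℝ) - 1 := by
      push_cast [Nat.cast_sub hn]; ring
    rw [this] at c2
    have : (WS s n : ℝ) = (WS s (n-1) : ℝ) + (s n : ℝ) := by exact_mod_cast h1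
    rw [c1, c2] at this
    linarith
  have h3 := abs_lt.mp (heb n (n-1))
  have h4 : (-1:ℝ) < (s n : ℝ) := by rw [h2]; linarith
  have h5 : (s n : ℝ) < 2 := by rw [h2]; linarith
  have h4' : (-1:ℤ) < s n := by exact_mod_cast h4
  have h5' : s n < 2 := by exact_mod_cast h5
  omega

lemma ws_prepend_le (a : ℤ) (l : ℕ) (s : ℕ → ℤ) {m : ℕ} (h : m ≤ l) :
    WS (Prepend a l s) m = a * m := by
  rw [WS]
  rw [Finset.sum_congr rfl (fun i hi => show Prepend a l s (i+1) = a by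
    rw [Prepend]; simp only [Finset.mem_range] at hi
    rw [if_pos (by omega)])]
  simp [mul_comm]

lemma ws_prepend_ge (a : ℤ) (l : ℕ) (s : ℕ → ℤ) {m : ℕ} (h : l ≤ m) :
    WS (Prepend a l s) m = a * l + WS s (m - l) := by
  rw [ws_split _ h, ws_prepend_le a l s le_rfl]
  congr 1
  rw [Finset.sum_Ico_eq_sum_range]
  refine Finset.sum_congr rfl fun i hi => ?_
  rw [Prepend]
  rw [if_neg (by omega)]
  congr 1
  omega

lemma tendsto_div_of_band (u : ℕ → ℤ) (θ₀ C : ℝ) (N : ℕ)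
    (h : ∀ m, N ≤ m → |(u m : ℝ) - m * θ₀| ≤ C) :
    Filter.Tendsto (fun m : ℕ => (u m : ℝ) / m) Filter.atTop (nhds θ₀) := by
  rw [← tendsto_sub_nhds_zero_iff]
  apply squeeze_zero_norm' (a := fun m : ℕ => C / m)
  · filter_upwards [Filter.eventually_ge_atTop (max N 1)] with m hm
    have hm1 : (1:ℕ) ≤ m := le_trans (le_max_right _ _) hm
    have hmN : N ≤ m := le_trans (le_max_left _ _) hm
    have hne : (m:ℝ) ≠ 0 := by positivity
    rw [show (u m : ℝ)/m - θ₀ = ((u m : ℝ) - m*θ₀)/m by field_simp]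
    rw [Real.norm_eq_abs, abs_div, abs_of_nonneg (by positivity : (0:ℝ) ≤ (m:ℝ))]
    gcongr
    exact h m hmN
  · exact tendsto_const_div_atTop_nhds_zero_nat C

/-- The slope of a word of the form `a^l s` with `s` Sturmian of slope `θ₁` is `θ₁`;
so if it also has slope `θ`, then `θ₁ = θ`. -/
lemma slope_eq {w : ℕ → ℤ} {a : ℤ} {l : ℕ} {s : ℕ → ℤ} {θ θ₁ : ℝ}
    (hs : IsSturmian θ₁ s) (hew : EqW w (Prepend a l s)) (h : HasSlope w θ) : θ₁ = θ := by
  obtain ⟨e, he, heb⟩ := sturmian_band hs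
  have he0 : e 0 = 0 := by have := he 0; simp [WS] at this; linarith
  have hband : ∀ m, l ≤ m → |(WS w m : ℝ) - m * θ₁| ≤ |a * l - l * θ₁| + 1 := by
    intro m hm
    have h1 : WS w m = a * l + WS s (m - l) := by
      rw [ws_congr hew, ws_prepend_ge a l s hm]
    have h2 := he (m - l)
    have hcast : ((m - l : ℕ) : ℝ) = (m : ℝ) - l := by push_cast [Nat.cast_sub hm]; ring
    rw [hcast] at h2
    have h3 : (WS w m : ℝ) - m * θ₁ = ((a:ℝ) * l - l * θ₁) + e (m - l) := by
      have : (WS w m : ℝ) = (a:ℝ) * l + (WS s (m-l) : ℝ) := by exact_mod_cast h1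
      rw [this, h2]; ring
    rw [h3]
    have h4 : |e (m - l)| < 1 := by
      have := heb (m - l) 0; rwa [he0, sub_zero] at this
    calc |((a:ℝ) * l - l * θ₁) + e (m-l)| ≤ |(a:ℝ) * l - l * θ₁| + |e (m-l)| := abs_add_le _ _
      _ ≤ |(a:ℝ) * l - l * θ₁| + 1 := by linarith
  have ht1 : Filter.Tendsto (fun m : ℕ => (WS w m : ℝ) / m) Filter.atTop (nhds θ₁) :=
    tendsto_div_of_band _ _ _ l hband
  have ht2 : Filter.Tendsto (fun m : ℕ => (WS w m : ℝ) / m) Filter.atTop (nhds θ) := by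
    have : (fun m : ℕ => (WS w m : ℝ) / m)
        = fun m : ℕ => (∑ i ∈ Finset.Icc 1 m, (w i : ℝ)) / m := by
      funext m
      congr 1
      rw [← ws_icc]
      push_cast
      rfl
    rw [this]
    exact h
  exact tendsto_nhds_unique ht1 ht2

set_option maxHeartbeats 2000000 in
theorem stmt9 (r θ : ℝ) (h0 : 0 < r) (h1 : r < 1) (w w' : ℕ → ℤ)
    (hw : MemS w) (hw' : MemS w') (h : HasSlope w θ) (h' : HasSlope w' θ)
    (hlt : LexLt w w') : tval r w < tval r w' := by
  obtain ⟨a, l, s, θ₁, ha, hs, hew⟩ := hw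
  obtain ⟨a', l', s', θ₂, ha', hs', hew'⟩ := hw'
  have hθ1 : θ₁ = θ := slope_eq hs hew h
  have hθ2 : θ₂ = θ := slope_eq hs' hew' h'
  subst hθ1; subst hθ2
  -- letters are binary
  have hbin : ∀ i, 1 ≤ i → w i = 0 ∨ w i = 1 := by
    intro i hi
    rw [hew i hi, Prepend]
    split
    · exact ha
    · exact sturmian_binary hs (by omega)
  have hbin' : ∀ i, 1 ≤ i → w' i = 0 ∨ w' i = 1 := by
    intro i hi
    rw [hew' i hi, Prepend]
    split
    · exact ha'
    · exact sturmian_binary hs' (by omega)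
  -- the difference of partial sums
  set Δ : ℕ → ℤ := fun m => WS w' m - WS w m with hΔdef
  set L : ℕ := max l l' with hLdef
  -- window property beyond the prefixes
  obtain ⟨e, he, heb⟩ := sturmian_band hs
  obtain ⟨e', he', heb'⟩ := sturmian_band hs'
  have hwsval : ∀ m, l ≤ m → (WS w m : ℝ) = (a:ℝ)*l + ((m:ℝ)-l)*θ₂ + e (m-l) := by
    intro m hm
    have h1 : WS w m = a * l + WS s (m - l) := by
      rw [ws_congr hew, ws_prepend_ge a l s hm]
    have h2 := he (m - l)
    have hcast : ((m - l : ℕ) : ℝ) = (m : ℝ) - l := by push_cast [Nat.cast_sub hm]; ring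
    rw [hcast] at h2
    have h3 : (WS w m : ℝ) = (a:ℝ) * l + (WS s (m-l) : ℝ) := by exact_mod_cast h1
    rw [h3, h2]; ring
  have hwsval' : ∀ m, l' ≤ m → (WS w' m : ℝ) = (a':ℝ)*l' + ((m:ℝ)-l')*θ₂ + e' (m-l') := by
    intro m hm
    have h1 : WS w' m = a' * l' + WS s' (m - l') := by
      rw [ws_congr hew', ws_prepend_ge a' l' s' hm]
    have h2 := he' (m - l')
    have hcast : ((m - l' : ℕ) : ℝ) = (m : ℝ) - l' := by push_cast [Nat.cast_sub hm]; ring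
    rw [hcast] at h2
    have h3 : (WS w' m : ℝ) = (a':ℝ) * l' + (WS s' (m-l') : ℝ) := by exact_mod_cast h1
    rw [h3, h2]; ring
  have hwin : ∀ m₁ m₂, L ≤ m₁ → L ≤ m₂ → Δ m₁ - Δ m₂ ≤ 1 := by
    intro m₁ m₂ hm1 hm2
    have hl1 : l ≤ m₁ := le_trans (le_max_left _ _) hm1
    have hl2 : l ≤ m₂ := le_trans (le_max_left _ _) hm2
    have hl1' : l' ≤ m₁ := le_trans (le_max_right _ _) hm1
    have hl2' : l' ≤ m₂ := le_trans (le_max_right _ _) hm2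
    have hreal : ((Δ m₁ - Δ m₂ : ℤ) : ℝ)
        = (e' (m₁-l') - e' (m₂-l')) - (e (m₁-l) - e (m₂-l)) := by
      have d1 : ((Δ m₁ : ℤ):ℝ) = (WS w' m₁ : ℝ) - (WS w m₁ : ℝ) := by
        simp only [hΔdef]; push_cast; ring
      have d2 : ((Δ m₂ : ℤ):ℝ) = (WS w' m₂ : ℝ) - (WS w m₂ : ℝ) := by
        simp only [hΔdef]; push_cast; ring
      push_cast
      rw [hwsval m₁ hl1, hwsval' m₁ hl1'] at d1
      rw [hwsval m₂ hl2, hwsval' m₂ hl2'] at d2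
      linarith
    have habs : ((Δ m₁ - Δ m₂ : ℤ) : ℝ) < 2 := by
      have b1 := abs_lt.mp (heb' (m₁-l') (m₂-l'))
      have b2 := abs_lt.mp (heb (m₁-l) (m₂-l))
      rw [hreal]; linarith
    have : (Δ m₁ - Δ m₂ : ℤ) < 2 := by exact_mod_cast habs
    omega
  -- lex data
  obtain ⟨n, hn1, hagree, hlt_n⟩ := hlt
  have hwn : w n = 0 ∧ w' n = 1 := by
    rcases hbin n hn1 with h1 | h1 <;> rcases hbin' n hn1 with h2 | h2 <;> omega
  have hΔlt : ∀ m, m < n → Δ m = 0 := by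
    intro m hm
    have : ∀ i ∈ Finset.range m, w' (i+1) - w (i+1) = 0 := by
      intro i hi
      simp only [Finset.mem_range] at hi
      have := hagree (i+1) (by omega) (by omega)
      omega
    simp only [hΔdef]
    rw [ws_sub, Finset.sum_congr rfl this]
    simp
  have hΔn : Δ n = 1 := by
    have h1 : Δ n = Δ (n-1) + (w' n - w n) := by
      simp only [hΔdef]
      have e1 := ws_succ w (n-1)
      have e2 := ws_succ w' (n-1)
      rw [show n - 1 + 1 = n by omega] at e1 e2
      omega
    rw [h1, hΔlt (n-1) (by omega), hwn.1, hwn.2]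
    ring
  have hΔle : ∀ m, Δ m ≤ m := by
    intro m
    simp only [hΔdef]
    rw [ws_sub]
    calc ∑ i ∈ Finset.range m, (w' (i+1) - w (i+1)) ≤ ∑ i ∈ Finset.range m, 1 := by
          apply Finset.sum_le_sum
          intro i _
          have := hbin (i+1) (by omega)
          have := hbin' (i+1) (by omega)
          omega
      _ = m := by simp
  -- main positivity of Δ
  have hpw : ∀ i, 1 ≤ i → i ≤ l → w i = a := by
    intro i hi hil
    rw [hew i hi]
    simp [Prepend, hil]
  have hpw' : ∀ i, 1 ≤ i → i ≤ l' → w' i = a' := by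
    intro i hi hil
    rw [hew' i hi]
    simp [Prepend, hil]
  have hstep : ∀ {m k : ℕ}, m ≤ k →
      Δ k = Δ m + ∑ i ∈ Finset.Ico m k, (w' (i+1) - w (i+1)) := by
    intro m k hmk
    simp only [hΔdef]
    rw [ws_split w hmk, ws_split w' hmk, Finset.sum_sub_distrib]
    ring
  have hMM : (∀ m, m ≤ max n L → 0 ≤ Δ m) ∧ 1 ≤ Δ (max n L) := by
    rcases le_or_gt L n with hLn | hnL
    · rw [max_eq_left hLn]
      refine ⟨fun m hm => ?_, by rw [hΔn]⟩
      rcases Nat.lt_or_ge m n with hmn | hmn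
      · rw [hΔlt m hmn]
      · have hmm : m = n := by omega
        rw [hmm, hΔn]
        norm_num
    · rcases le_or_gt l' l with hll | hll
      · have hLl : L = l := by rw [hLdef]; exact max_eq_left hll
        have hnl : n ≤ l := by omega
        have ha0 : a = 0 := by
          have h1 := hpw n hn1 hnl
          have h2 := hwn.1
          omega
        have hclaim : ∀ m, n ≤ m → m ≤ l → 1 ≤ Δ m := by
          intro m hnm hml
          rw [hstep hnm]
          have hsum : 0 ≤ ∑ i ∈ Finset.Ico n m, (w' (i+1) - w (i+1)) := by
            apply Finset.sum_nonneg
            intro i hi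
            simp only [Finset.mem_Ico] at hi
            have hwi : w (i+1) = a := hpw (i+1) (by omega) (by omega)
            have := hbin' (i+1) (by omega)
            omega
          omega
        have hmax : max n L = L := max_eq_right (by omega)
        rw [hmax, hLl]
        refine ⟨fun m hm => ?_, hclaim l (by omega) le_rfl⟩
        rcases Nat.lt_or_ge m n with hmn | hmn
        · rw [hΔlt m hmn]
        · have := hclaim m hmn hm
          omega
      · have hLl : L = l' := by rw [hLdef]; exact max_eq_right hll.le
        have hnl : n ≤ l' := by omega
        have ha1 : a' = 1 := by
          have h1 := hpw' n hn1 hnl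
          have h2 := hwn.2
          omega
        have hclaim : ∀ m, n ≤ m → m ≤ l' → 1 ≤ Δ m := by
          intro m hnm hml
          rw [hstep hnm]
          have hsum : 0 ≤ ∑ i ∈ Finset.Ico n m, (w' (i+1) - w (i+1)) := by
            apply Finset.sum_nonneg
            intro i hi
            simp only [Finset.mem_Ico] at hi
            have hwi : w' (i+1) = a' := hpw' (i+1) (by omega) (by omega)
            have := hbin (i+1) (by omega)
            omega
          omega
        have hmax : max n L = L := max_eq_right (by omega)
        rw [hmax, hLl]
        refine ⟨fun m hm => ?_, hclaim l' (by omega) le_rfl⟩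
        rcases Nat.lt_or_ge m n with hmn | hmn
        · rw [hΔlt m hmn]
        · have := hclaim m hmn hm
          omega
  obtain ⟨hM0, hM1⟩ := hMM
  have hA : ∀ m, 0 ≤ Δ m := by
    intro m
    rcases le_or_gt m (max n L) with hm | hm
    · exact hM0 m hm
    · have := hwin (max n L) m (le_max_right _ _) (le_trans (le_max_right _ _) hm.le)
      omega
  have hB : ∀ m, Δ m ≤ (L:ℤ) + 1 := by
    intro m
    rcases le_or_gt m L with hm | hm
    · have := hΔle m
      have : (m:ℤ) ≤ (L:ℤ) := by exact_mod_cast hm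
      omega
    · have h2 := hwin m L (by omega) le_rfl
      have h3 := hΔle L
      have : (L:ℤ) ≤ (L:ℤ) := le_rfl
      omega
  -- analytic conclusion
  have hgeo : Summable (fun i : ℕ => r ^ (i+1)) :=
    (summable_nat_add_iff 1).mpr (summable_geometric_of_lt_one h0.le h1)
  have hsw : Summable (fun i : ℕ => (w (i+1) : ℝ) * r^(i+1)) := by
    apply Summable.of_norm_bounded hgeo
    intro i
    rw [norm_mul, Real.norm_eq_abs, Real.norm_eq_abs, abs_pow, abs_of_pos h0]
    have hb := hbin (i+1) (by omega)
    have : |(w (i+1) : ℝ)| ≤ 1 := by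
      rcases hb with hb | hb <;> rw [hb] <;> norm_num
    nlinarith [pow_nonneg h0.le (i+1)]
  have hsw' : Summable (fun i : ℕ => (w' (i+1) : ℝ) * r^(i+1)) := by
    apply Summable.of_norm_bounded hgeo
    intro i
    rw [norm_mul, Real.norm_eq_abs, Real.norm_eq_abs, abs_pow, abs_of_pos h0]
    have hb := hbin' (i+1) (by omega)
    have : |(w' (i+1) : ℝ)| ≤ 1 := by
      rcases hb with hb | hb <;> rw [hb] <;> norm_num
    nlinarith [pow_nonneg h0.le (i+1)]
  have hsΔ : Summable (fun i : ℕ => (Δ i : ℝ) * r^i) := by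
    apply Summable.of_norm_bounded (g := fun i : ℕ => ((L:ℝ)+1) * r^i)
      ((summable_geometric_of_lt_one h0.le h1).mul_left _)
    intro i
    rw [norm_mul, Real.norm_eq_abs, Real.norm_eq_abs, abs_pow, abs_of_pos h0]
    have hb1 := hA i
    have hb2 := hB i
    have : |(Δ i : ℝ)| ≤ (L:ℝ) + 1 := by
      rw [abs_of_nonneg (by exact_mod_cast hb1)]
      exact_mod_cast hb2
    nlinarith [pow_nonneg h0.le i]
  have hsΔ1 : Summable (fun i : ℕ => (Δ (i+1) : ℝ) * r^(i+1)) :=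
    (summable_nat_add_iff 1).mpr hsΔ
  set A : ℝ := ∑' i : ℕ, (Δ (i+1) : ℝ) * r^(i+1) with hAdef
  have hΔ0 : Δ 0 = 0 := by simp [hΔdef, WS]
  have htsumΔ : ∑' i : ℕ, (Δ i : ℝ) * r^i = A := by
    rw [hsΔ.tsum_eq_zero_add, hΔ0]
    simp
    exact hAdef.symm
  have key : tval r w' - tval r w = (1 - r) * A := by
    rw [tval, tval, ← hsw'.tsum_sub hsw]
    have hterm : ∀ i : ℕ, (w' (i+1):ℝ) * r^(i+1) - (w (i+1):ℝ) * r^(i+1)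
        = (Δ (i+1):ℝ) * r^(i+1) - r * ((Δ i:ℝ) * r^i) := by
      intro i
      have hrec : Δ (i+1) = Δ i + (w' (i+1) - w (i+1)) := by
        simp only [hΔdef]
        have e1 := ws_succ w i
        have e2 := ws_succ w' i
        omega
      have hrec' : (Δ (i+1):ℝ) = (Δ i:ℝ) + ((w' (i+1):ℝ) - (w (i+1):ℝ)) := by
        exact_mod_cast hrec
      rw [hrec']
      ring
    rw [tsum_congr hterm, hsΔ1.tsum_sub (hsΔ.mul_left r), tsum_mul_left, htsumΔ]
    ring
  have hterm_nonneg : ∀ i : ℕ, 0 ≤ (Δ (i+1):ℝ) * r^(i+1) := fun i =>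
    mul_nonneg (by exact_mod_cast hA (i+1)) (by positivity)
  have hge : (Δ ((n-1)+1):ℝ) * r^((n-1)+1) ≤ A :=
    hsΔ1.le_tsum (n-1) (fun j _ => hterm_nonneg j)
  rw [show n - 1 + 1 = n by omega] at hge
  have hΔnR : (Δ n : ℝ) = 1 := by exact_mod_cast hΔn
  rw [hΔnR, one_mul] at hge
  have hrn : (0:ℝ) < r^n := pow_pos h0 n
  have hApos : 0 < A := lt_of_lt_of_le hrn hge
  have : 0 < (1 - r) * A := mul_pos (by linarith) hApos
  linarith
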